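/- Let H = p₁² + p₂² + a·q₁^(-2/3) + b·q₂^(-2/3) on q₁ > 0, q₂ > 0, and let Y₆ = p₁²p₂²(p₁q₂ - p₂q₁)² + 2(p₁q₂ - p₂q₁)[a·p₂²(q₂p₁ - 2q₁p₂)·q₁^(-2/3) + b·p₁²(2q₂p₁ - q₁p₂)·q₂^(-2/3)] + a²q₂²p₂²·q₁^(-4/3) + 2ab(4q₂²p₁² - 9q₁q₂p₁p₂ + 4q₁²p₂²)·q₁^(-2/3)q₂^(-2/3) + b²q₁²p₁²·q₂^(-4/3) + 4ab(a·q₂^(4/3)·q₁^(-4/3) + b·q₁^(4/3)·q₂^(-4/3)). Then {H, Y₆} = 0. -/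

import Mathlib

noncomputable def pb (F G : ℝ → ℝ → ℝ → ℝ → ℝ) (q1 q2 p1 p2 : ℝ) : ℝ :=
  deriv (fun x => F x q2 p1 p2) q1 * deriv (fun x => G q1 q2 x p2) p1
  + deriv (fun x => F q1 x p1 p2) q2 * deriv (fun x => G q1 q2 p1 x) p2
  - deriv (fun x => F q1 q2 x p2) p1 * deriv (fun x => G x q2 p1 p2) q1
  - deriv (fun x => F q1 q2 p1 x) p2 * deriv (fun x => G q1 x p1 p2) q2

noncomputable def H (a b : ℝ) (q1 q2 p1 p2 : ℝ) : ℝ :=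
  p1 ^ 2 + p2 ^ 2 + a * q1 ^ (-(2 : ℝ) / 3) + b * q2 ^ (-(2 : ℝ) / 3)

noncomputable def Y6 (a b : ℝ) (q1 q2 p1 p2 : ℝ) : ℝ :=
  p1 ^ 2 * p2 ^ 2 * (p1 * q2 - p2 * q1) ^ 2
  + 2 * (p1 * q2 - p2 * q1) *
      (a * p2 ^ 2 * (q2 * p1 - 2 * q1 * p2) * q1 ^ (-(2 : ℝ) / 3)
       + b * p1 ^ 2 * (2 * q2 * p1 - q1 * p2) * q2 ^ (-(2 : ℝ) / 3))
  + a ^ 2 * q2 ^ 2 * p2 ^ 2 * q1 ^ (-(4 : ℝ) / 3)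
  + 2 * a * b * (4 * q2 ^ 2 * p1 ^ 2 - 9 * q1 * q2 * p1 * p2 + 4 * q1 ^ 2 * p2 ^ 2)
      * q1 ^ (-(2 : ℝ) / 3) * q2 ^ (-(2 : ℝ) / 3)
  + b ^ 2 * q1 ^ 2 * p1 ^ 2 * q2 ^ (-(4 : ℝ) / 3)
  + 4 * a * b * (a * q2 ^ ((4 : ℝ) / 3) * q1 ^ (-(4 : ℝ) / 3)
      + b * q1 ^ ((4 : ℝ) / 3) * q2 ^ (-(4 : ℝ) / 3))

lemma deriv_canon (c0 c1 c2 ca ca1 ca2 cb cc : ℝ) {x : ℝ} (hx : x ≠ 0) :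
    deriv (fun y : ℝ => c0 + c1 * y + c2 * y ^ 2 + ca * y ^ (-(2 : ℝ) / 3)
      + ca1 * (y * y ^ (-(2 : ℝ) / 3)) + ca2 * (y ^ 2 * y ^ (-(2 : ℝ) / 3))
      + cb * y ^ (-(4 : ℝ) / 3) + cc * y ^ ((4 : ℝ) / 3)) x
    = c1 + 2 * c2 * x + ca * (-(2 : ℝ) / 3 * x ^ (-(2 : ℝ) / 3 - 1))
      + ca1 * (x ^ (-(2 : ℝ) / 3) + x * (-(2 : ℝ) / 3 * x ^ (-(2 : ℝ) / 3 - 1)))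
      + ca2 * (2 * x * x ^ (-(2 : ℝ) / 3) + x ^ 2 * (-(2 : ℝ) / 3 * x ^ (-(2 : ℝ) / 3 - 1)))
      + cb * (-(4 : ℝ) / 3 * x ^ (-(4 : ℝ) / 3 - 1)) + cc * ((4 : ℝ) / 3 * x ^ ((4 : ℝ) / 3 - 1)) := by
  have hA : HasDerivAt (fun y : ℝ => y ^ (-(2 : ℝ) / 3)) (-(2 : ℝ) / 3 * x ^ (-(2 : ℝ) / 3 - 1)) x :=
    Real.hasDerivAt_rpow_const (Or.inl hx)
  have hB : HasDerivAt (fun y : ℝ => y ^ (-(4 : ℝ) / 3)) (-(4 : ℝ) / 3 * x ^ (-(4 : ℝ) / 3 - 1)) x :=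
    Real.hasDerivAt_rpow_const (Or.inl hx)
  have hC : HasDerivAt (fun y : ℝ => y ^ ((4 : ℝ) / 3)) ((4 : ℝ) / 3 * x ^ ((4 : ℝ) / 3 - 1)) x :=
    Real.hasDerivAt_rpow_const (Or.inl hx)
  have hid : HasDerivAt (fun y : ℝ => y) 1 x := hasDerivAt_id x
  have hsq : HasDerivAt (fun y : ℝ => y ^ 2) (2 * x) x := by
    simpa using hasDerivAt_pow 2 x
  have h := (((((((hasDerivAt_const x c0).add (hid.const_mul c1)).add
      (hsq.const_mul c2)).add (hA.const_mul ca)).add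
      ((hid.mul hA).const_mul ca1)).add ((hsq.mul hA).const_mul ca2)).add
      (hB.const_mul cb)).add (hC.const_mul cc)
  exact h.deriv.trans (by ring)

lemma deriv_poly4 (d0 d1 d2 d3 d4 : ℝ) (x : ℝ) :
    deriv (fun y : ℝ => d0 + d1 * y + d2 * y ^ 2 + d3 * y ^ 3 + d4 * y ^ 4) x
    = d1 + 2 * d2 * x + 3 * d3 * x ^ 2 + 4 * d4 * x ^ 3 := by
  have hid : HasDerivAt (fun y : ℝ => y) 1 x := hasDerivAt_id x
  have h2 : HasDerivAt (fun y : ℝ => y ^ 2) (2 * x) x := by simpa using hasDerivAt_pow 2 x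
  have h3 : HasDerivAt (fun y : ℝ => y ^ 3) (3 * x ^ 2) x := by simpa using hasDerivAt_pow 3 x
  have h4 : HasDerivAt (fun y : ℝ => y ^ 4) (4 * x ^ 3) x := by simpa using hasDerivAt_pow 4 x
  have h := ((((hasDerivAt_const x d0).add (hid.const_mul d1)).add
    (h2.const_mul d2)).add (h3.const_mul d3)).add (h4.const_mul d4)
  exact h.deriv.trans (by ring)

theorem stmt10 (a b : ℝ) (q1 q2 p1 p2 : ℝ) (hq1 : 0 < q1) (hq2 : 0 < q2) :
    pb (H a b) (Y6 a b) q1 q2 p1 p2 = 0 := by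
  have eHq1 : (fun x => H a b x q2 p1 p2) = (fun y : ℝ => (b*q2 ^ (-(2 : ℝ) / 3) + p2^2 + p1^2) + (0) * y + (0) * y ^ 2 + (a) * y ^ (-(2 : ℝ) / 3) + (0) * (y * y ^ (-(2 : ℝ) / 3)) + (0) * (y ^ 2 * y ^ (-(2 : ℝ) / 3)) + (0) * y ^ (-(4 : ℝ) / 3) + (0) * y ^ ((4 : ℝ) / 3)) := by
    funext y; unfold H; ring
  have eHq2 : (fun x => H a b q1 x p1 p2) = (fun y : ℝ => (a*q1 ^ (-(2 : ℝ) / 3) + p2^2 + p1^2) + (0) * y + (0) * y ^ 2 + (b) * y ^ (-(2 : ℝ) / 3) + (0) * (y * y ^ (-(2 : ℝ) / 3)) + (0) * (y ^ 2 * y ^ (-(2 : ℝ) / 3)) + (0) * y ^ (-(4 : ℝ) / 3) + (0) * y ^ ((4 : ℝ) / 3)) := by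
    funext y; unfold H; ring
  have eHp1 : (fun x => H a b q1 q2 x p2) = (fun y : ℝ => (b*q2 ^ (-(2 : ℝ) / 3) + a*q1 ^ (-(2 : ℝ) / 3) + p2^2) + (0) * y + (1) * y ^ 2 + (0) * y ^ 3 + (0) * y ^ 4) := by
    funext y; unfold H; ring
  have eHp2 : (fun x => H a b q1 q2 p1 x) = (fun y : ℝ => (b*q2 ^ (-(2 : ℝ) / 3) + a*q1 ^ (-(2 : ℝ) / 3) + p1^2) + (0) * y + (1) * y ^ 2 + (0) * y ^ 3 + (0) * y ^ 4) := by
    funext y; unfold H; ring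
  have eYq1 : (fun x => Y6 a b x q2 p1 p2) = (fun y : ℝ => (4*q2^2*p1^4*b*q2 ^ (-(2 : ℝ) / 3) + q2^2*p1^4*p2^2) + (-6*q2*p1^3*p2*b*q2 ^ (-(2 : ℝ) / 3) - 2*q2*p1^3*p2^3) * y + (p1^2*b^2*q2 ^ (-(4 : ℝ) / 3) + 2*p1^2*p2^2*b*q2 ^ (-(2 : ℝ) / 3) + p1^2*p2^4) * y ^ 2 + (8*q2^2*p1^2*a*b*q2 ^ (-(2 : ℝ) / 3) + 2*q2^2*p1^2*p2^2*a) * y ^ (-(2 : ℝ) / 3) + (-18*q2*p1*p2*a*b*q2 ^ (-(2 : ℝ) / 3) - 6*q2*p1*p2^3*a) * (y * y ^ (-(2 : ℝ) / 3)) + (8*p2^2*a*b*q2 ^ (-(2 : ℝ) / 3) + 4*p2^4*a) * (y ^ 2 * y ^ (-(2 : ℝ) / 3)) + (4*a^2*b*q2 ^ ((4 : ℝ) / 3) + q2^2*p2^2*a^2) * y ^ (-(4 : ℝ) / 3) + (4*a*b^2*q2 ^ (-(4 : ℝ) / 3)) * y ^ ((4 : ℝ) / 3)) := by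
    funext y; unfold Y6; ring
  have eYq2 : (fun x => Y6 a b q1 x p1 p2) = (fun y : ℝ => (4*q1^2*p2^4*a*q1 ^ (-(2 : ℝ) / 3) + q1^2*p1^2*p2^4) + (-6*q1*p1*p2^3*a*q1 ^ (-(2 : ℝ) / 3) - 2*q1*p1^3*p2^3) * y + (p2^2*a^2*q1 ^ (-(4 : ℝ) / 3) + 2*p1^2*p2^2*a*q1 ^ (-(2 : ℝ) / 3) + p1^4*p2^2) * y ^ 2 + (8*q1^2*p2^2*a*b*q1 ^ (-(2 : ℝ) / 3) + 2*q1^2*p1^2*p2^2*b) * y ^ (-(2 : ℝ) / 3) + (-18*q1*p1*p2*a*b*q1 ^ (-(2 : ℝ) / 3) - 6*q1*p1^3*p2*b) * (y * y ^ (-(2 : ℝ) / 3)) + (8*p1^2*a*b*q1 ^ (-(2 : ℝ) / 3) + 4*p1^4*b) * (y ^ 2 * y ^ (-(2 : ℝ) / 3)) + (4*a*b^2*q1 ^ ((4 : ℝ) / 3) + q1^2*p1^2*b^2) * y ^ (-(4 : ℝ) / 3) + (4*a^2*b*q1 ^ (-(4 : ℝ) / 3)) * y ^ ((4 : ℝ)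 / 3)) := by
    funext y; unfold Y6; ring
  have eYp1 : (fun x => Y6 a b q1 q2 x p2) = (fun y : ℝ => (4*a*b^2*q2 ^ (-(4 : ℝ) / 3)*q1 ^ ((4 : ℝ) / 3) + 4*a^2*b*q1 ^ (-(4 : ℝ) / 3)*q2 ^ ((4 : ℝ) / 3) + q2^2*p2^2*a^2*q1 ^ (-(4 : ℝ) / 3) + 8*q1^2*p2^2*a*b*q1 ^ (-(2 : ℝ) / 3)*q2 ^ (-(2 : ℝ) / 3) + 4*q1^2*p2^4*a*q1 ^ (-(2 : ℝ) / 3)) + (-18*q1*q2*p2*a*b*q1 ^ (-(2 : ℝ) / 3)*q2 ^ (-(2 : ℝ) / 3) - 6*q1*q2*p2^3*a*q1 ^ (-(2 : ℝ) / 3)) * y + (8*q2^2*a*b*q1 ^ (-(2 : ℝ) / 3)*q2 ^ (-(2 : ℝ) / 3) + 2*q2^2*p2^2*a*q1 ^ (-(2 : ℝ) / 3) + q1^2*b^2*q2 ^ (-(4 : ℝ) / 3) + 2*q1^2*p2^2*b*q2 ^ (-(2 : ℝ) / 3) + q1^2*p2^4) * y ^ 2 + (-6*q1*q2*p2*b*q2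 ^ (-(2 : ℝ) / 3) - 2*q1*q2*p2^3) * y ^ 3 + (4*q2^2*b*q2 ^ (-(2 : ℝ) / 3) + q2^2*p2^2) * y ^ 4) := by
    funext y; unfold Y6; ring
  have eYp2 : (fun x => Y6 a b q1 q2 p1 x) = (fun y : ℝ => (4*a*b^2*q2 ^ (-(4 : ℝ) / 3)*q1 ^ ((4 : ℝ) / 3) + 4*a^2*b*q1 ^ (-(4 : ℝ) / 3)*q2 ^ ((4 : ℝ) / 3) + 8*q2^2*p1^2*a*b*q1 ^ (-(2 : ℝ) / 3)*q2 ^ (-(2 : ℝ) / 3) + 4*q2^2*p1^4*b*q2 ^ (-(2 : ℝ) / 3) + q1^2*p1^2*b^2*q2 ^ (-(4 : ℝ) / 3)) + (-18*q1*q2*p1*a*b*q1 ^ (-(2 : ℝ) / 3)*q2 ^ (-(2 : ℝ) / 3) - 6*q1*q2*p1^3*b*q2 ^ (-(2 : ℝ) / 3)) * y + (q2^2*a^2*q1 ^ (-(4 : ℝ) / 3) + 2*q2^2*p1^2*a*q1 ^ (-(2 : ℝ) / 3) + q2^2*p1^4 + 8*q1^2*a*b*q1 ^ (-(2 : ℝ)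 / 3)*q2 ^ (-(2 : ℝ) / 3) + 2*q1^2*p1^2*b*q2 ^ (-(2 : ℝ) / 3)) * y ^ 2 + (-6*q1*q2*p1*a*q1 ^ (-(2 : ℝ) / 3) - 2*q1*q2*p1^3) * y ^ 3 + (4*q1^2*a*q1 ^ (-(2 : ℝ) / 3) + q1^2*p1^2) * y ^ 4) := by
    funext y; unfold Y6; ring
  unfold pb
  rw [eHq1, eHq2, eHp1, eHp2, eYq1, eYq2, eYp1, eYp2]
  simp only [deriv_canon _ _ _ _ _ _ _ _ hq1.ne', deriv_canon _ _ _ _ _ _ _ _ hq2.ne',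
    deriv_poly4]
  have r1 : q1 ^ (-(2 : ℝ) / 3 - 1) = q1 ^ (-(2 : ℝ) / 3) / q1 := by
    rw [Real.rpow_sub hq1, Real.rpow_one]
  have r3 : q1 ^ (-(4 : ℝ) / 3) = (q1 ^ (-(2 : ℝ) / 3)) ^ 2 := by
    rw [show (-(4 : ℝ) / 3) = (-(2 : ℝ) / 3) + (-(2 : ℝ) / 3) by norm_num,
      Real.rpow_add hq1]; ring
  have r2 : q1 ^ (-(4 : ℝ) / 3 - 1) = (q1 ^ (-(2 : ℝ) / 3)) ^ 2 / q1 := by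
    rw [Real.rpow_sub hq1, Real.rpow_one, r3]
  have r4 : q1 ^ ((4 : ℝ) / 3 - 1) = q1 * q1 ^ (-(2 : ℝ) / 3) := by
    rw [show ((4 : ℝ) / 3 - 1) = (1 : ℝ) + (-(2 : ℝ) / 3) by norm_num,
      Real.rpow_add hq1, Real.rpow_one]
  have r5 : q1 ^ ((4 : ℝ) / 3) = q1 ^ 2 * q1 ^ (-(2 : ℝ) / 3) := by
    rw [show ((4 : ℝ) / 3) = (2 : ℝ) + (-(2 : ℝ) / 3) by norm_num,
      Real.rpow_add hq1, show (2 : ℝ) = ((2 : ℕ) : ℝ) by norm_num, Real.rpow_natCast]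
  have s1 : q2 ^ (-(2 : ℝ) / 3 - 1) = q2 ^ (-(2 : ℝ) / 3) / q2 := by
    rw [Real.rpow_sub hq2, Real.rpow_one]
  have s3 : q2 ^ (-(4 : ℝ) / 3) = (q2 ^ (-(2 : ℝ) / 3)) ^ 2 := by
    rw [show (-(4 : ℝ) / 3) = (-(2 : ℝ) / 3) + (-(2 : ℝ) / 3) by norm_num,
      Real.rpow_add hq2]; ring
  have s2 : q2 ^ (-(4 : ℝ) / 3 - 1) = (q2 ^ (-(2 : ℝ) / 3)) ^ 2 / q2 := by
    rw [Real.rpow_sub hq2, Real.rpow_one, s3]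
  have s4 : q2 ^ ((4 : ℝ) / 3 - 1) = q2 * q2 ^ (-(2 : ℝ) / 3) := by
    rw [show ((4 : ℝ) / 3 - 1) = (1 : ℝ) + (-(2 : ℝ) / 3) by norm_num,
      Real.rpow_add hq2, Real.rpow_one]
  have s5 : q2 ^ ((4 : ℝ) / 3) = q2 ^ 2 * q2 ^ (-(2 : ℝ) / 3) := by
    rw [show ((4 : ℝ) / 3) = (2 : ℝ) + (-(2 : ℝ) / 3) by norm_num,
      Real.rpow_add hq2, show (2 : ℝ) = ((2 : ℕ) : ℝ) by norm_num, Real.rpow_natCast]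
  rw [r1, r2, r3, r4, r5, s1, s2, s3, s4, s5]
  field_simp
  ring
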